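/- Soundness and completeness of RmbC(Ax) with respect to the neighborhood frames validating Ax: let Ax be a set formed by one or more of the axiom schemas (ciw), (ci), (cl), (cf), (ce). For every set of formulas Γ ∪ {φ} over Σ, Γ ⊢_{RmbC(Ax)} φ if and only if Γ ⊨_{NM(Ax)} φ. -/

import Mathlib

namespace LFI

/-- Formulas over the propositional signature Σ = {∧,∨,→,¬,∘}:
`neg` is the paraconsistent negation ¬ and `circ` the consistency operator ∘. -/
inductive Formula : Type
  | var : ℕ → Formula
  | and : Formula → Formula → Formula
  | or : Formula → Formula → Formula
  | imp : Formula → Formula → Formula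
  | neg : Formula → Formula
  | circ : Formula → Formula

namespace Formula

/-- `α ↔ β` abbreviates `(α→β) ∧ (β→α)`. -/
def iffF (a b : Formula) : Formula := and (imp a b) (imp b a)

/-- Conjunction `γ ∧ γ₁ ∧ … ∧ γₙ` of the nonempty list `γ :: l` (right-associated). -/
def conjL (γ : Formula) : List Formula → Formula
  | [] => γ
  | ψ :: l => and γ (conjL ψ l)

/-- `subst p α γ` is `γ[p/α]`: the result of replacing every occurrence of
the propositional variable `p` in `γ` by `α`. -/
def subst (p : ℕ) (α : Formula) : Formula → Formula
  | var q => if q = p then α else var q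
  | and a b => and (subst p α a) (subst p α b)
  | or a b => or (subst p α a) (subst p α b)
  | imp a b => imp (subst p α a) (subst p α b)
  | neg a => neg (subst p α a)
  | circ a => circ (subst p α a)

end Formula

open Formula

/-- Theoremhood for the Hilbert calculus `RmbC` (axioms Ax1–Ax10 of CPL⁺ plus (bc1),
modus ponens and the replacement rules (R¬), (R∘)) extended with an arbitrary set `Ax`
of extra axiom(-schema instance)s.  `Prf ∅` is theoremhood in RmbC itself. -/
inductive Prf (Ax : Set Formula) : Formula → Prop
  | ax1 (a b : Formula) : Prf Ax (imp a (imp b a))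
  | ax2 (a b c : Formula) :
      Prf Ax (imp (imp a (imp b c)) (imp (imp a b) (imp a c)))
  | ax3 (a b : Formula) : Prf Ax (imp a (imp b (and a b)))
  | ax4 (a b : Formula) : Prf Ax (imp (and a b) a)
  | ax5 (a b : Formula) : Prf Ax (imp (and a b) b)
  | ax6 (a b : Formula) : Prf Ax (imp a (or a b))
  | ax7 (a b : Formula) : Prf Ax (imp b (or a b))
  | ax8 (a b c : Formula) :
      Prf Ax (imp (imp a c) (imp (imp b c) (imp (or a b) c)))
  | ax9 (a b : Formula) : Prf Ax (or (imp a b) a)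
  | ax10 (a : Formula) : Prf Ax (or a (neg a))
  | bc1 (a b : Formula) : Prf Ax (imp (circ a) (imp a (imp (neg a) b)))
  | ext {a : Formula} : a ∈ Ax → Prf Ax a
  | mp {a b : Formula} : Prf Ax (imp a b) → Prf Ax a → Prf Ax b
  | rneg {a b : Formula} : Prf Ax (iffF a b) → Prf Ax (iffF (neg a) (neg b))
  | rcirc {a b : Formula} : Prf Ax (iffF a b) → Prf Ax (iffF (circ a) (circ b))

/-- Local derivation from premises: `Γ ⊢ φ` iff `φ` is a theorem, or there is a
finite nonempty subset `{γ, γ₁, …, γₙ} ⊆ Γ` with `⊢ (γ ∧ γ₁ ∧ … ∧ γₙ) → φ`. -/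
def Deriv (Ax Γ : Set Formula) (φ : Formula) : Prop :=
  Prf Ax φ ∨ ∃ (γ : Formula) (l : List Formula),
    γ ∈ Γ ∧ (∀ ψ ∈ l, ψ ∈ Γ) ∧ Prf Ax (imp (conjL γ l) φ)

/-- The conditions making unary operations `nB` (¬) and `cB` (∘) on a Boolean algebra
into LFI operators: `a ∨ ¬a = 1` and `a ∧ ¬a ∧ ∘a = 0`.  A BALFI is a Boolean algebra
equipped with two such operations. -/
def IsBALFI {A : Type*} [BooleanAlgebra A] (nB cB : A → A) : Prop :=
  (∀ a : A, a ⊔ nB a = ⊤) ∧ (∀ a : A, a ⊓ nB a ⊓ cB a = ⊥)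

/-- The valuation (Σ-homomorphism) on a BALFI determined by the assignment `d` of
values to propositional variables;  `→` is interpreted as Boolean implication `aᶜ ⊔ b`. -/
def eval {A : Type*} [BooleanAlgebra A] (nB cB : A → A) (d : ℕ → A) : Formula → A
  | .var n => d n
  | .and a b => eval nB cB d a ⊓ eval nB cB d b
  | .or a b => eval nB cB d a ⊔ eval nB cB d b
  | .imp a b => (eval nB cB d a)ᶜ ⊔ eval nB cB d b
  | .neg a => nB (eval nB cB d a)
  | .circ a => cB (eval nB cB d a)

/-- Instances of the schema (ciw): `∘α ∨ (α ∧ ¬α)`. -/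
def ciwSet : Set Formula := { f | ∃ a, f = .or (.circ a) (.and a (.neg a)) }
/-- Instances of the schema (ci): `¬∘α → (α ∧ ¬α)`. -/
def ciSet : Set Formula := { f | ∃ a, f = .imp (.neg (.circ a)) (.and a (.neg a)) }
/-- Instances of the schema (cl): `¬(α ∧ ¬α) → ∘α`. -/
def clSet : Set Formula := { f | ∃ a, f = .imp (.neg (.and a (.neg a))) (.circ a) }
/-- Instances of the schema (cf): `¬¬α → α`. -/
def cfSet : Set Formula := { f | ∃ a, f = .imp (.neg (.neg a)) a }
/-- Instances of the schema (ce): `α → ¬¬α`. -/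
def ceSet : Set Formula := { f | ∃ a, f = .imp a (.neg (.neg a)) }
/-- Instances of the schema (ca∧): `(∘α ∧ ∘β) → ∘(α ∧ β)`. -/
def caAndSet : Set Formula :=
  { f | ∃ a b, f = .imp (.and (.circ a) (.circ b)) (.circ (.and a b)) }
/-- Instances of the schema (ca∨): `(∘α ∧ ∘β) → ∘(α ∨ β)`. -/
def caOrSet : Set Formula :=
  { f | ∃ a b, f = .imp (.and (.circ a) (.circ b)) (.circ (.or a b)) }
/-- Instances of the schema (ca→): `(∘α ∧ ∘β) → ∘(α → β)`. -/
def caImpSet : Set Formula :=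
  { f | ∃ a b, f = .imp (.and (.circ a) (.circ b)) (.circ (.imp a b)) }

/-- The eight extension axiom schemas of Definition 3.1. -/
inductive Schema : Type
  | ciw | ci | cl | cf | ce | caAnd | caOr | caImp

/-- The set of instances of a schema. -/
def Schema.instSet : Schema → Set Formula
  | .ciw => ciwSet
  | .ci => ciSet
  | .cl => clSet
  | .cf => cfSet
  | .ce => ceSet
  | .caAnd => caAndSet
  | .caOr => caOrSet
  | .caImp => caImpSet

/-- The BALFI `(A, nB, cB)` is a model of every formula in `S` (as axiom schema
instances): all of them take value `⊤` under every valuation. -/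
def ModelsSet {A : Type*} [BooleanAlgebra A] (nB cB : A → A) (S : Set Formula) : Prop :=
  ∀ ψ ∈ S, ∀ d : ℕ → A, eval nB cB d ψ = ⊤

/-- The denotation function of the neighborhood model `⟨⟨W, Sn, Sc⟩, d⟩` for RmbC. -/
def nden {W : Type} (Sn Sc : Set W → Set W) (d : ℕ → Set W) : Formula → Set W
  | .var n => d n
  | .and a b => nden Sn Sc d a ∩ nden Sn Sc d b
  | .or a b => nden Sn Sc d a ∪ nden Sn Sc d b
  | .imp a b => (nden Sn Sc d a)ᶜ ∪ nden Sn Sc d b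
  | .neg a => (nden Sn Sc d a)ᶜ ∪ Sn (nden Sn Sc d a)
  | .circ a =>
      (nden Sn Sc d a ∩ ((nden Sn Sc d a)ᶜ ∪ Sn (nden Sn Sc d a)))ᶜ ∩ Sc (nden Sn Sc d a)

/-- `φ` is valid w.r.t. neighborhood models: true (denotation = W) in every
neighborhood model over every nonempty set of worlds. -/
def NMValid (φ : Formula) : Prop :=
  ∀ (W : Type), Nonempty W → ∀ (Sn Sc : Set W → Set W) (d : ℕ → Set W),
    nden Sn Sc d φ = Set.univ

/-- Local consequence w.r.t. neighborhood models: `Γ ⊨_NM φ` iff `⊨_NM φ`, or there is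
a finite nonempty subset `{γ, γ₁,…,γₙ} ⊆ Γ` with `⊨_NM (γ ∧ γ₁ ∧ … ∧ γₙ) → φ`. -/
def NMConseq (Γ : Set Formula) (φ : Formula) : Prop :=
  NMValid φ ∨ ∃ (γ : Formula) (l : List Formula), γ ∈ Γ ∧ (∀ ψ ∈ l, ψ ∈ Γ) ∧
    NMValid (Formula.imp (Formula.conjL γ l) φ)

/-- `φ` is valid in the neighborhood frame `⟨W, Sn, Sc⟩`: true in every model over it. -/
def ValidInFrame {W : Type} (Sn Sc : Set W → Set W) (φ : Formula) : Prop :=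
  ∀ d : ℕ → Set W, nden Sn Sc d φ = Set.univ

/-- Validity over the class NM(Ax) of neighborhood frames validating every formula in `Ax`. -/
def NMValidExt (Ax : Set Formula) (φ : Formula) : Prop :=
  ∀ (W : Type), Nonempty W → ∀ Sn Sc : Set W → Set W,
    (∀ ψ ∈ Ax, ValidInFrame Sn Sc ψ) →
    ∀ d : ℕ → Set W, nden Sn Sc d φ = Set.univ

/-- Local consequence over the class NM(Ax) of neighborhood frames validating `Ax`. -/
def NMConseqExt (Ax Γ : Set Formula) (φ : Formula) : Prop :=
  NMValidExt Ax φ ∨ ∃ (γ : Formula) (l : List Formula), γ ∈ Γ ∧ (∀ ψ ∈ l, ψ ∈ Γ) ∧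
    NMValidExt Ax (Formula.imp (Formula.conjL γ l) φ)

-- ===== toolkit =====

inductive Drv (Ax Γ : Set Formula) : Formula → Prop
  | thm {a} : Prf Ax a → Drv Ax Γ a
  | prem {a} : a ∈ Γ → Drv Ax Γ a
  | mp {a b} : Drv Ax Γ (imp a b) → Drv Ax Γ a → Drv Ax Γ b

variable {Ax Γ Γ' : Set Formula}

theorem Prf.impId (Ax : Set Formula) (a : Formula) : Prf Ax (imp a a) :=
  Prf.mp (Prf.mp (Prf.ax2 a (imp a a) a) (Prf.ax1 a (imp a a))) (Prf.ax1 a a)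

theorem Drv.deduction {a b : Formula} (h : Drv Ax (insert a Γ) b) :
    Drv Ax Γ (imp a b) := by
  induction h with
  | thm h => exact .mp (.thm (Prf.ax1 _ _)) (.thm h)
  | @prem c h =>
    rcases Set.mem_insert_iff.mp h with h | h
    · subst h; exact .thm (Prf.impId _ _)
    · exact .mp (.thm (Prf.ax1 _ _)) (.prem h)
  | mp h1 h2 ih1 ih2 => exact .mp (.mp (.thm (Prf.ax2 _ _ _)) ih1) ih2

theorem Drv.weaken (hs : Γ ⊆ Γ') {b : Formula} (h : Drv Ax Γ b) : Drv Ax Γ' b := by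
  induction h with
  | thm h => exact .thm h
  | prem h => exact .prem (hs h)
  | mp _ _ ih1 ih2 => exact .mp ih1 ih2

theorem drv_empty_iff {b : Formula} : Drv Ax ∅ b ↔ Prf Ax b := by
  constructor
  · intro h
    induction h with
    | thm h => exact h
    | prem h => exact absurd h (Set.notMem_empty _)
    | mp _ _ ih1 ih2 => exact ih1.mp ih2
  · exact .thm

/-- from `Drv {a} b` get `Prf (a → b)`. -/
theorem prf_imp_of_drv {a b : Formula} (h : Drv Ax {a} b) : Prf Ax (imp a b) := by
  have : Drv Ax (insert a ∅) b := by simpa using h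
  exact drv_empty_iff.mp this.deduction

theorem Drv.finite {b : Formula} (h : Drv Ax Γ b) :
    ∃ L : List Formula, (∀ ψ ∈ L, ψ ∈ Γ) ∧ Drv Ax {ψ | ψ ∈ L} b := by
  induction h with
  | @thm a h => exact ⟨[], by simp, .thm h⟩
  | @prem a h => exact ⟨[a], by simpa using h, .prem (by simp)⟩
  | @mp a b _ _ ih1 ih2 =>
    obtain ⟨L1, hL1, d1⟩ := ih1
    obtain ⟨L2, hL2, d2⟩ := ih2
    refine ⟨L1 ++ L2, ?_, ?_⟩
    · intro ψ hψ
      rcases List.mem_append.mp hψ with h | h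
      exacts [hL1 _ h, hL2 _ h]
    exact .mp (d1.weaken (by intro x hx; simp_all)) (d2.weaken (by intro x hx; simp_all))

/-- A set `Δ` saturated w.r.t. not deriving `χ`. -/
def Sat (Ax Δ : Set Formula) (χ : Formula) : Prop :=
  ¬ Drv Ax Δ χ ∧ ∀ φ, φ ∉ Δ → Drv Ax (insert φ Δ) χ

theorem lindenbaum (h : ¬ Drv Ax Γ χ) : ∃ Δ, Γ ⊆ Δ ∧ Sat Ax Δ χ := by
  have zorn := zorn_subset_nonempty {Δ | ¬ Drv Ax Δ χ} ?_ Γ h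
  case refine_2 =>
    obtain ⟨m, hm1, hm2⟩ := zorn
    refine ⟨m, hm1, hm2.prop, fun φ hφ => ?_⟩
    by_contra hd
    exact hφ (hm2.2 hd (Set.subset_insert _ _) (Set.mem_insert _ _))
  case refine_1 =>
    intro c hc hchain hne
    refine ⟨⋃₀ c, ?_, fun s hs => Set.subset_sUnion_of_mem hs⟩
    intro hd
    obtain ⟨L, hL, d⟩ := hd.finite
    -- find a single element of the chain containing L
    obtain ⟨t, ht, hLt⟩ : ∃ t ∈ c, ∀ ψ ∈ L, ψ ∈ t := by
      clear d
      induction L with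
      | nil => exact ⟨hne.choose, hne.choose_spec, by simp⟩
      | cons a L ih =>
        obtain ⟨t, ht, hLt⟩ := ih (fun ψ hψ => hL ψ (by simp [hψ]))
        obtain ⟨u, hu, hau⟩ := hL a (by simp)
        rcases hchain.total ht hu with hh | hh
        · refine ⟨u, hu, fun ψ hψ => ?_⟩
          rcases List.mem_cons.mp hψ with rfl | hψ
          exacts [hau, hh (hLt _ hψ)]
        · refine ⟨t, ht, fun ψ hψ => ?_⟩
          rcases List.mem_cons.mp hψ with rfl | hψ
          exacts [hh hau, hLt _ hψ]
    exact hc ht (d.weaken hLt)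

theorem Prf.andI {a b : Formula} (ha : Prf Ax a) (hb : Prf Ax b) : Prf Ax (and a b) :=
  ((Prf.ax3 a b).mp ha).mp hb

theorem Prf.iffF_of {a b : Formula} (ha : Prf Ax a) (hb : Prf Ax b) : Prf Ax (iffF a b) :=
  Prf.andI ((Prf.ax1 b a).mp hb) ((Prf.ax1 a b).mp ha)

theorem Prf.iff1 {a b : Formula} (h : Prf Ax (iffF a b)) : Prf Ax (imp a b) :=
  (Prf.ax4 _ _).mp h

theorem Prf.iff2 {a b : Formula} (h : Prf Ax (iffF a b)) : Prf Ax (imp b a) :=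
  (Prf.ax5 _ _).mp h

namespace Sat
variable {Δ : Set Formula} {χ a b : Formula}

theorem mem_of_drv (hΔ : Sat Ax Δ χ) (h : Drv Ax Δ a) : a ∈ Δ := by
  by_contra ha
  exact hΔ.1 (.mp (hΔ.2 a ha).deduction h)

theorem thm_mem (hΔ : Sat Ax Δ χ) (h : Prf Ax a) : a ∈ Δ := hΔ.mem_of_drv (.thm h)

theorem mp_mem (hΔ : Sat Ax Δ χ) (h : imp a b ∈ Δ) (ha : a ∈ Δ) : b ∈ Δ :=
  hΔ.mem_of_drv (.mp (.prem h) (.prem ha))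

theorem prime (hΔ : Sat Ax Δ χ) (h : or a b ∈ Δ) : a ∈ Δ ∨ b ∈ Δ := by
  by_contra hab
  push_neg at hab
  have da : Drv Ax Δ (imp a χ) := (hΔ.2 a hab.1).deduction
  have db : Drv Ax Δ (imp b χ) := (hΔ.2 b hab.2).deduction
  exact hΔ.1 (.mp (.mp (.mp (.thm (Prf.ax8 a b χ)) da) db) (.prem h))

theorem and_mem_iff (hΔ : Sat Ax Δ χ) : and a b ∈ Δ ↔ a ∈ Δ ∧ b ∈ Δ := by
  constructor
  · exact fun h => ⟨hΔ.mp_mem (hΔ.thm_mem (Prf.ax4 a b)) h,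
      hΔ.mp_mem (hΔ.thm_mem (Prf.ax5 a b)) h⟩
  · exact fun ⟨ha, hb⟩ => hΔ.mp_mem (hΔ.mp_mem (hΔ.thm_mem (Prf.ax3 a b)) ha) hb

theorem or_mem_iff (hΔ : Sat Ax Δ χ) : or a b ∈ Δ ↔ a ∈ Δ ∨ b ∈ Δ := by
  constructor
  · exact hΔ.prime
  · rintro (h | h)
    exacts [hΔ.mp_mem (hΔ.thm_mem (Prf.ax6 a b)) h, hΔ.mp_mem (hΔ.thm_mem (Prf.ax7 a b)) h]

theorem imp_mem_iff (hΔ : Sat Ax Δ χ) : imp a b ∈ Δ ↔ (a ∈ Δ → b ∈ Δ) := by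
  constructor
  · exact hΔ.mp_mem
  · intro h
    rcases hΔ.prime (hΔ.thm_mem (Prf.ax9 a b)) with hh | hh
    · exact hh
    · exact hΔ.mp_mem (hΔ.thm_mem (Prf.ax1 b a)) (h hh)

theorem neg_mem_of_not_mem (hΔ : Sat Ax Δ χ) (h : a ∉ Δ) : neg a ∈ Δ :=
  (hΔ.prime (hΔ.thm_mem (Prf.ax10 a))).resolve_left h

theorem not_trio (hΔ : Sat Ax Δ χ) (hc : circ a ∈ Δ) (ha : a ∈ Δ) (hn : neg a ∈ Δ) :
    False :=
  hΔ.1 (.prem (hΔ.mp_mem (hΔ.mp_mem (hΔ.mp_mem (hΔ.thm_mem (Prf.bc1 a χ)) hc) ha) hn))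

end Sat

/-- Worlds of the canonical model: relatively maximal theories. -/
def CW (Ax : Set Formula) : Type := {Δ : Set Formula // ∃ χ, Sat Ax Δ χ}

/-- Canonical truth set of a formula. -/
def tv (Ax : Set Formula) (φ : Formula) : Set (CW Ax) := {Δ | φ ∈ Δ.1}

section tv
variable {a b : Formula}

theorem tv_and : tv Ax (and a b) = tv Ax a ∩ tv Ax b := by
  ext Δ; obtain ⟨χ, hΔ⟩ := Δ.2
  simpa [tv] using hΔ.and_mem_iff

theorem tv_or : tv Ax (or a b) = tv Ax a ∪ tv Ax b := by
  ext Δ; obtain ⟨χ, hΔ⟩ := Δ.2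
  simpa [tv] using hΔ.or_mem_iff

theorem tv_imp : tv Ax (imp a b) = (tv Ax a)ᶜ ∪ tv Ax b := by
  ext Δ; obtain ⟨χ, hΔ⟩ := Δ.2
  simp only [tv, Set.mem_setOf_eq, Set.mem_union, Set.mem_compl_iff]
  rw [hΔ.imp_mem_iff]; tauto

theorem tv_mono (h : Prf Ax (imp a b)) : tv Ax a ⊆ tv Ax b := by
  intro Δ hΔm; obtain ⟨χ, hΔ⟩ := Δ.2
  exact hΔ.mp_mem (hΔ.thm_mem h) hΔm

theorem tv_thm (h : Prf Ax a) : tv Ax a = Set.univ := by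
  ext Δ; obtain ⟨χ, hΔ⟩ := Δ.2
  simpa [tv] using hΔ.thm_mem h

theorem prf_of_tv_subset (h : tv Ax a ⊆ tv Ax b) : Prf Ax (imp a b) := by
  by_contra hp
  have hnd : ¬ Drv Ax {a} b := fun hd => hp (prf_imp_of_drv hd)
  obtain ⟨Δ, hsub, hΔ⟩ := lindenbaum hnd
  have haΔ : a ∈ Δ := hsub rfl
  have hbΔ : b ∉ Δ := fun hb => hΔ.1 (.prem hb)
  exact hbΔ (h (show (⟨Δ, b, hΔ⟩ : CW Ax) ∈ tv Ax a from haΔ))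

theorem prf_of_tv_univ (h : tv Ax a = Set.univ) : Prf Ax a := by
  by_contra hp
  have hnd : ¬ Drv Ax ∅ a := fun hd => hp (drv_empty_iff.mp hd)
  obtain ⟨Δ, _, hΔ⟩ := lindenbaum hnd
  have haΔ : a ∉ Δ := fun ha => hΔ.1 (.prem ha)
  have : (⟨Δ, a, hΔ⟩ : CW Ax) ∈ tv Ax a := by rw [h]; trivial
  exact haΔ this

theorem prf_iffF_of_tv_eq (h : tv Ax a = tv Ax b) : Prf Ax (iffF a b) :=
  Prf.andI (prf_of_tv_subset h.le) (prf_of_tv_subset h.ge)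

theorem compl_subset_tv_neg : (tv Ax a)ᶜ ⊆ tv Ax (neg a) := by
  intro Δ hΔm; obtain ⟨χ, hΔ⟩ := Δ.2
  exact hΔ.neg_mem_of_not_mem hΔm

theorem tv_neg_union : (tv Ax a)ᶜ ∪ tv Ax (neg a) = tv Ax (neg a) :=
  Set.union_eq_self_of_subset_left compl_subset_tv_neg

theorem tv_trio : tv Ax a ∩ tv Ax (neg a) ∩ tv Ax (circ a) = ∅ := by
  ext Δ
  simp only [Set.mem_inter_iff, Set.mem_empty_iff_false, iff_false, not_and, tv,
    Set.mem_setOf_eq, and_imp]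
  intro ha hn hc
  obtain ⟨χ, hΔ⟩ := Δ.2
  exact hΔ.not_trio hc ha hn

/-- A false formula. -/
def bot0 : Formula := and (circ (var 0)) (and (var 0) (neg (var 0)))

theorem tv_bot0 : tv Ax bot0 = ∅ := by
  ext Δ
  obtain ⟨χ, hΔ⟩ := Δ.2
  simp only [tv, bot0, Set.mem_setOf_eq, Set.mem_empty_iff_false, iff_false]
  intro h
  rw [hΔ.and_mem_iff] at h
  obtain ⟨hc, h2⟩ := h
  rw [hΔ.and_mem_iff] at h2
  exact hΔ.not_trio hc h2.1 h2.2

theorem tv_compl : (tv Ax a)ᶜ = tv Ax (imp a bot0) := by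
  rw [tv_imp, tv_bot0, Set.union_empty]

end tv


-- ===== more derivations =====

theorem Prf.imp_trans {a b c : Formula} (h1 : Prf Ax (imp a b)) (h2 : Prf Ax (imp b c)) :
    Prf Ax (imp a c) :=
  prf_imp_of_drv (.mp (.thm h2) (.mp (.thm h1) (.prem rfl)))

/-- From (ci) instances, `¬∘∘a` implies anything. -/
theorem ci_explosive (hci : ∀ c, Prf Ax (imp (neg (circ c)) (and c (neg c))))
    (a b : Formula) : Prf Ax (imp (neg (circ (circ a))) b) := by
  apply prf_imp_of_drv
  have h0 : Drv Ax {neg (circ (circ a))} (and (circ a) (neg (circ a))) :=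
    .mp (.thm (hci (circ a))) (.prem rfl)
  have hca : Drv Ax {neg (circ (circ a))} (circ a) := .mp (.thm (Prf.ax4 _ _)) h0
  have hnca : Drv Ax {neg (circ (circ a))} (neg (circ a)) := .mp (.thm (Prf.ax5 _ _)) h0
  have h1 : Drv Ax {neg (circ (circ a))} (and a (neg a)) := .mp (.thm (hci a)) hnca
  exact .mp (.mp (.mp (.thm (Prf.bc1 a b)) hca) (.mp (.thm (Prf.ax4 _ _)) h1))
    (.mp (.thm (Prf.ax5 _ _)) h1)

theorem ci_circcirc (hci : ∀ c, Prf Ax (imp (neg (circ c)) (and c (neg c))))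
    (a : Formula) : Prf Ax (circ (circ a)) :=
  Prf.mp (Prf.mp (Prf.mp (Prf.ax8 _ _ _) (Prf.impId Ax _))
    (ci_explosive hci a _)) (Prf.ax10 (circ (circ a)))

/-- A true formula. -/
def top0 : Formula := imp bot0 bot0

theorem tv_top0 : tv Ax top0 = Set.univ := tv_thm (Prf.impId Ax _)

-- ===== canonical neighborhood functions =====

/-- Canonical `S¬`. -/
def CSn (Ax : Set Formula) : Set (CW Ax) → Set (CW Ax) :=
  fun X => {Δ | ∃ φ, X = tv Ax φ ∧ neg φ ∈ Δ.1}

/-- Canonical `S∘`. -/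
def CSc (Ax : Set Formula) : Set (CW Ax) → Set (CW Ax) :=
  fun X => {Δ | (∃ φ, X = tv Ax φ) → ∃ φ, X = tv Ax φ ∧ circ φ ∈ Δ.1}

theorem CSn_tv {a : Formula} : CSn Ax (tv Ax a) = tv Ax (neg a) := by
  ext Δ
  constructor
  · rintro ⟨φ, hφ, hn⟩
    obtain ⟨χ, hΔ⟩ := Δ.2
    exact hΔ.mp_mem (hΔ.thm_mem (Prf.iff2 (Prf.rneg (prf_iffF_of_tv_eq hφ)))) hn
  · exact fun h => ⟨a, rfl, h⟩

theorem CSc_tv {a : Formula} : CSc Ax (tv Ax a) = tv Ax (circ a) := by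
  ext Δ
  constructor
  · intro h
    obtain ⟨φ, hφ, hc⟩ := h ⟨a, rfl⟩
    obtain ⟨χ, hΔ⟩ := Δ.2
    exact hΔ.mp_mem (hΔ.thm_mem (Prf.iff2 (Prf.rcirc (prf_iffF_of_tv_eq hφ)))) hc
  · exact fun h _ => ⟨a, rfl, h⟩

theorem CSn_off {X : Set (CW Ax)} (h : ¬ ∃ φ, X = tv Ax φ) : CSn Ax X = ∅ := by
  ext Δ
  simp only [CSn, Set.mem_setOf_eq, Set.mem_empty_iff_false, iff_false]
  rintro ⟨φ, hφ, -⟩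
  exact h ⟨φ, hφ⟩

theorem CSc_off {X : Set (CW Ax)} (h : ¬ ∃ φ, X = tv Ax φ) : CSc Ax X = Set.univ := by
  ext Δ
  simp only [CSc, Set.mem_setOf_eq, Set.mem_univ, iff_true]
  exact fun hex => absurd hex h

-- ===== the ¬/∘ set operators =====

/-- Denotation operator for `¬`. -/
def etaOp {W : Type} (Sn : Set W → Set W) (X : Set W) : Set W := Xᶜ ∪ Sn X

/-- Denotation operator for `∘`. -/
def kapOp {W : Type} (Sn Sc : Set W → Set W) (X : Set W) : Set W :=
  (X ∩ etaOp Sn X)ᶜ ∩ Sc X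

theorem nden_neg {W : Type} (Sn Sc : Set W → Set W) (d : ℕ → Set W) (a : Formula) :
    nden Sn Sc d (neg a) = etaOp Sn (nden Sn Sc d a) := rfl

theorem nden_circ {W : Type} (Sn Sc : Set W → Set W) (d : ℕ → Set W) (a : Formula) :
    nden Sn Sc d (circ a) = kapOp Sn Sc (nden Sn Sc d a) := rfl

theorem eta_tv {a : Formula} : etaOp (CSn Ax) (tv Ax a) = tv Ax (neg a) := by
  rw [etaOp, CSn_tv, tv_neg_union]

theorem kap_tv {a : Formula} : kapOp (CSn Ax) (CSc Ax) (tv Ax a) = tv Ax (circ a) := by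
  rw [kapOp, eta_tv, CSc_tv]
  apply Set.inter_eq_self_of_subset_right
  intro Δ hΔ
  simp only [Set.mem_compl_iff, Set.mem_inter_iff, not_and]
  intro ha hn
  exact absurd (Set.eq_empty_iff_forall_notMem.mp (tv_trio (a := a)) Δ) (by simp [ha, hn, hΔ])

theorem eta_off {X : Set (CW Ax)} (h : ¬ ∃ φ, X = tv Ax φ) : etaOp (CSn Ax) X = Xᶜ := by
  rw [etaOp, CSn_off h, Set.union_empty]

theorem kap_off {X : Set (CW Ax)} (h : ¬ ∃ φ, X = tv Ax φ) :
    kapOp (CSn Ax) (CSc Ax) X = Set.univ := by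
  rw [kapOp, eta_off h, CSc_off h, Set.inter_comm, Set.univ_inter, Set.inter_compl_self,
    Set.compl_empty]

theorem compl_off {X : Set (CW Ax)} (h : ¬ ∃ φ, X = tv Ax φ) : ¬ ∃ φ, Xᶜ = tv Ax φ := by
  rintro ⟨φ, hφ⟩
  exact h ⟨imp φ bot0, by rw [← tv_compl, ← hφ, compl_compl]⟩

-- ===== truth lemma =====

theorem truth_lemma (φ : Formula) :
    nden (CSn Ax) (CSc Ax) (fun n => tv Ax (var n)) φ = tv Ax φ := by
  induction φ with
  | var n => rfl
  | and a b iha ihb => rw [show nden (CSn Ax) (CSc Ax) _ (and a b) =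
      nden (CSn Ax) (CSc Ax) _ a ∩ nden (CSn Ax) (CSc Ax) _ b from rfl, iha, ihb, tv_and]
  | or a b iha ihb => rw [show nden (CSn Ax) (CSc Ax) _ (or a b) =
      nden (CSn Ax) (CSc Ax) _ a ∪ nden (CSn Ax) (CSc Ax) _ b from rfl, iha, ihb, tv_or]
  | imp a b iha ihb => rw [show nden (CSn Ax) (CSc Ax) _ (imp a b) =
      (nden (CSn Ax) (CSc Ax) _ a)ᶜ ∪ nden (CSn Ax) (CSc Ax) _ b from rfl, iha, ihb, tv_imp]
  | neg a iha => rw [nden_neg, iha, eta_tv]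
  | circ a iha => rw [nden_circ, iha, kap_tv]

-- ===== soundness =====

theorem nden_iffF_univ {W : Type} {Sn Sc : Set W → Set W} {d : ℕ → Set W} {a b : Formula}
    (h : nden Sn Sc d (iffF a b) = Set.univ) : nden Sn Sc d a = nden Sn Sc d b := by
  have h' := Set.ext_iff.mp h
  simp only [iffF, nden, Set.mem_inter_iff, Set.mem_union, Set.mem_compl_iff,
    Set.mem_univ, iff_true] at h'
  ext x
  have := h' x
  tauto

theorem nden_iffF_of_eq {W : Type} {Sn Sc : Set W → Set W} {d : ℕ → Set W} {a b : Formula}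
    (h : nden Sn Sc d a = nden Sn Sc d b) : nden Sn Sc d (iffF a b) = Set.univ := by
  ext x
  simp only [iffF, nden, Set.mem_inter_iff, Set.mem_union, Set.mem_compl_iff,
    Set.mem_univ, iff_true, h]
  tauto

theorem soundness {ψ : Formula} (h : Prf Ax ψ) : NMValidExt Ax ψ := by
  intro W hW Sn Sc hAx
  induction h with
  | ext h => exact hAx _ h
  | mp h1 h2 ih1 ih2 =>
    intro d
    have e1 := Set.ext_iff.mp (ih1 d)
    have e2 := Set.ext_iff.mp (ih2 d)
    simp only [nden, Set.mem_union, Set.mem_compl_iff, Set.mem_univ, iff_true] at e1 e2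
    ext x
    have := e1 x
    have := e2 x
    simp only [Set.mem_univ, iff_true]
    tauto
  | rneg h ih =>
    intro d
    apply nden_iffF_of_eq
    rw [nden_neg, nden_neg, nden_iffF_univ (ih d)]
  | rcirc h ih =>
    intro d
    apply nden_iffF_of_eq
    rw [nden_circ, nden_circ, nden_iffF_univ (ih d)]
  | _ =>
    intro d
    ext x
    simp only [nden, etaOp, kapOp, Set.mem_union, Set.mem_inter_iff, Set.mem_compl_iff,
      Set.mem_univ, iff_true]
    tauto

-- ===== frame conditions for the extension schemas =====

section shapes
variable {Ax : Set Formula} {X : Set (CW Ax)}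

local notation "E" => etaOp (CSn Ax)
local notation "K" => kapOp (CSn Ax) (CSc Ax)

theorem shape_ciw (hprf : ∀ φ, Prf Ax (or (circ φ) (and φ (neg φ)))) :
    K X ∪ (X ∩ E X) = Set.univ := by
  by_cases hX : ∃ φ, X = tv Ax φ
  · obtain ⟨φ, rfl⟩ := hX
    rw [kap_tv, eta_tv, ← tv_and, ← tv_or]
    exact tv_thm (hprf φ)
  · rw [kap_off hX]
    simp

theorem shape_ci (hci : ∀ φ, Prf Ax (imp (neg (circ φ)) (and φ (neg φ)))) :
    (E (K X))ᶜ ∪ (X ∩ E X) = Set.univ := by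
  by_cases hX : ∃ φ, X = tv Ax φ
  · obtain ⟨φ, rfl⟩ := hX
    rw [kap_tv, eta_tv, eta_tv, ← tv_and, ← tv_imp]
    exact tv_thm (hci φ)
  · rw [kap_off hX, eta_off hX]
    have h1 : Prf Ax (imp (neg top0) bot0) :=
      Prf.imp_trans
        (Prf.iff2 (Prf.rneg (Prf.iffF_of (ci_circcirc hci (var 0)) (Prf.impId Ax bot0))))
        (ci_explosive hci (var 0) bot0)
    have h2 : E Set.univ = ∅ := by
      rw [← tv_top0, eta_tv]
      exact Set.subset_empty_iff.mp (tv_bot0 (Ax := Ax) ▸ tv_mono h1)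
    rw [h2]
    simp

theorem shape_cl (hcl : ∀ φ, Prf Ax (imp (neg (and φ (neg φ))) (circ φ))) :
    (E (X ∩ E X))ᶜ ∪ K X = Set.univ := by
  by_cases hX : ∃ φ, X = tv Ax φ
  · obtain ⟨φ, rfl⟩ := hX
    rw [eta_tv, ← tv_and, eta_tv, kap_tv, ← tv_imp]
    exact tv_thm (hcl φ)
  · rw [kap_off hX]
    simp

theorem shape_cf (hcf : ∀ φ, Prf Ax (imp (neg (neg φ)) φ)) :
    (E (E X))ᶜ ∪ X = Set.univ := by
  by_cases hX : ∃ φ, X = tv Ax φ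
  · obtain ⟨φ, rfl⟩ := hX
    rw [eta_tv, eta_tv, ← tv_imp]
    exact tv_thm (hcf φ)
  · rw [eta_off hX, eta_off (compl_off hX), compl_compl]
    simp

theorem shape_ce (hce : ∀ φ, Prf Ax (imp φ (neg (neg φ)))) :
    Xᶜ ∪ E (E X) = Set.univ := by
  by_cases hX : ∃ φ, X = tv Ax φ
  · obtain ⟨φ, rfl⟩ := hX
    rw [eta_tv, eta_tv, ← tv_imp]
    exact tv_thm (hce φ)
  · rw [eta_off hX, eta_off (compl_off hX), compl_compl]
    simp

end shapes

-- ===== frame validity of the axioms in the canonical frame =====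

theorem canonical_frame_valid {Ax : Set Formula} {S : Set Schema}
    (hsub : S ⊆ {Schema.ciw, Schema.ci, Schema.cl, Schema.cf, Schema.ce})
    (hAx : Ax = ⋃ s ∈ S, Schema.instSet s) :
    ∀ ψ ∈ Ax, ValidInFrame (CSn Ax) (CSc Ax) ψ := by
  intro ψ hψ d
  have hmem : ∀ {s : Schema}, s ∈ S → ∀ {f : Formula}, f ∈ s.instSet → Prf Ax f :=
    fun {s} hs {f} hf => Prf.ext (by rw [hAx]; exact Set.mem_biUnion hs hf)
  rw [hAx, Set.mem_iUnion₂] at hψ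
  obtain ⟨s, hsS, hinst⟩ := hψ
  cases s with
  | ciw =>
    obtain ⟨a, rfl⟩ := hinst
    rw [show nden (CSn Ax) (CSc Ax) d (or (circ a) (and a (neg a))) =
      kapOp (CSn Ax) (CSc Ax) (nden (CSn Ax) (CSc Ax) d a) ∪
        (nden (CSn Ax) (CSc Ax) d a ∩ etaOp (CSn Ax) (nden (CSn Ax) (CSc Ax) d a)) from rfl]
    exact shape_ciw fun φ => hmem hsS ⟨φ, rfl⟩
  | ci =>
    obtain ⟨a, rfl⟩ := hinst
    rw [show nden (CSn Ax) (CSc Ax) d (imp (neg (circ a)) (and a (neg a))) =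
      (etaOp (CSn Ax) (kapOp (CSn Ax) (CSc Ax) (nden (CSn Ax) (CSc Ax) d a)))ᶜ ∪
        (nden (CSn Ax) (CSc Ax) d a ∩ etaOp (CSn Ax) (nden (CSn Ax) (CSc Ax) d a)) from rfl]
    exact shape_ci fun φ => hmem hsS ⟨φ, rfl⟩
  | cl =>
    obtain ⟨a, rfl⟩ := hinst
    rw [show nden (CSn Ax) (CSc Ax) d (imp (neg (and a (neg a))) (circ a)) =
      (etaOp (CSn Ax) (nden (CSn Ax) (CSc Ax) d a ∩
        etaOp (CSn Ax) (nden (CSn Ax) (CSc Ax) d a)))ᶜ ∪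
        kapOp (CSn Ax) (CSc Ax) (nden (CSn Ax) (CSc Ax) d a) from rfl]
    exact shape_cl fun φ => hmem hsS ⟨φ, rfl⟩
  | cf =>
    obtain ⟨a, rfl⟩ := hinst
    rw [show nden (CSn Ax) (CSc Ax) d (imp (neg (neg a)) a) =
      (etaOp (CSn Ax) (etaOp (CSn Ax) (nden (CSn Ax) (CSc Ax) d a)))ᶜ ∪
        nden (CSn Ax) (CSc Ax) d a from rfl]
    exact shape_cf fun φ => hmem hsS ⟨φ, rfl⟩
  | ce =>
    obtain ⟨a, rfl⟩ := hinst
    rw [show nden (CSn Ax) (CSc Ax) d (imp a (neg (neg a))) =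
      (nden (CSn Ax) (CSc Ax) d a)ᶜ ∪
        etaOp (CSn Ax) (etaOp (CSn Ax) (nden (CSn Ax) (CSc Ax) d a)) from rfl]
    exact shape_ce fun φ => hmem hsS ⟨φ, rfl⟩
  | caAnd => exact absurd (hsub hsS) (by simp)
  | caOr => exact absurd (hsub hsS) (by simp)
  | caImp => exact absurd (hsub hsS) (by simp)

-- ===== completeness =====

theorem completeness {S : Set Schema}
    (hsub : S ⊆ {Schema.ciw, Schema.ci, Schema.cl, Schema.cf, Schema.ce}) {ψ : Formula}
    (h : NMValidExt (⋃ s ∈ S, Schema.instSet s) ψ) :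
    Prf (⋃ s ∈ S, Schema.instSet s) ψ := by
  set Ax := ⋃ s ∈ S, Schema.instSet s with hAxdef
  by_contra hp
  have hnd : ¬ Drv Ax ∅ ψ := fun hd => hp (drv_empty_iff.mp hd)
  obtain ⟨Δ, -, hΔ⟩ := lindenbaum hnd
  have hψΔ : ψ ∉ Δ := fun hψ => hΔ.1 (.prem hψ)
  have hne : Nonempty (CW Ax) := ⟨⟨Δ, ψ, hΔ⟩⟩
  have := h (CW Ax) hne (CSn Ax) (CSc Ax) (canonical_frame_valid hsub rfl)
    (fun n => tv Ax (var n))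
  rw [truth_lemma] at this
  have hmem : (⟨Δ, ψ, hΔ⟩ : CW Ax) ∈ tv Ax ψ := by rw [this]; trivial
  exact hψΔ hmem

theorem prf_iff_valid {S : Set Schema}
    (hsub : S ⊆ {Schema.ciw, Schema.ci, Schema.cl, Schema.cf, Schema.ce}) (ψ : Formula) :
    Prf (⋃ s ∈ S, Schema.instSet s) ψ ↔ NMValidExt (⋃ s ∈ S, Schema.instSet s) ψ :=
  ⟨soundness, completeness hsub⟩

/-- Theorem 5.16: soundness and completeness of RmbC(Ax) w.r.t. the
class NM(Ax) of neighborhood frames validating Ax, where Ax is formed by one or more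
of the schemas (ciw),(ci),(cl),(cf),(ce): `Γ ⊢_{RmbC(Ax)} φ` iff `Γ ⊨_{NM(Ax)} φ`. -/
theorem rmbcAx_nbhd_sound_complete (S : Set Schema) (hS : S.Nonempty)
    (hsub : S ⊆ {Schema.ciw, Schema.ci, Schema.cl, Schema.cf, Schema.ce})
    (Γ : Set Formula) (φ : Formula) :
    Deriv (⋃ s ∈ S, s.instSet) Γ φ ↔ NMConseqExt (⋃ s ∈ S, s.instSet) Γ φ := by
  unfold Deriv NMConseqExt
  exact or_congr (prf_iff_valid hsub φ)
    (exists_congr fun γ => exists_congr fun l => and_congr_right fun _ =>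
      and_congr_right fun _ => prf_iff_valid hsub _)

end LFI
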